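/- Let G be a finite simple connected graph, μ a median-consistent vertex of G, and H a μ-convex subgraph of G. Then H is an isometric subgraph of G (d_H(x,y) = d_G(x,y) for all x,y ∈ V(H)), μ is a median-consistent vertex of H, and the unique median in H of μ, x, y equals the unique median in G of μ, x, y for all x,y ∈ V(H). -/

import Mathlib

open SimpleGraph

/-- `z` lies on some shortest path connecting `u` and `v` in the graph `G`,
i.e. `z ∈ I(u,v)`. -/
def OnShortestPath {V : Type*} (G : SimpleGraph V) (u v z : V) : Prop :=
  ∃ p : G.Walk u v, p.length = G.dist u v ∧ z ∈ p.support

/-- `m` is a median point of the triple `u, v, w`, i.e. `m ∈ I(u,v) ∩ I(u,w) ∩ I(v,w)`. -/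
def IsMedianPt {V : Type*} (G : SimpleGraph V) (u v w m : V) : Prop :=
  OnShortestPath G u v m ∧ OnShortestPath G u w m ∧ OnShortestPath G v w m

/-- `μ` is a median-consistent (medico) vertex of `G`:
`|I(μ,v,w)| = 1` for all vertices `v, w`. -/
def Medico {V : Type*} (G : SimpleGraph V) (μ : V) : Prop :=
  ∀ v w : V, ∃! m : V, IsMedianPt G μ v w m

/-- A subgraph `H` of `G` is `v`-convex: `v ∈ V(H)` and every shortest path in `G`
connecting `v` and a vertex `x` of `H` is contained in `H`. -/
def VConvex {V : Type*} (G : SimpleGraph V) (H : G.Subgraph) (v : V) : Prop :=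
  v ∈ H.verts ∧
    ∀ x ∈ H.verts, ∀ p : G.Walk v x, p.length = G.dist v x → p.toSubgraph ≤ H

section Aux

variable {V : Type*} {G : SimpleGraph V}

/-- Lift a walk of `G` contained in a subgraph `H` to a walk of `H.coe`. -/
def liftWalk (H : G.Subgraph) :
    ∀ {u v : V} (p : G.Walk u v), p.toSubgraph ≤ H → ∀ (hu : u ∈ H.verts) (hv : v ∈ H.verts),
      H.coe.Walk ⟨u, hu⟩ ⟨v, hv⟩
  | _, _, Walk.nil, _, _, _ => Walk.nil
  | _, _, @Walk.cons _ _ a b c h q, hle, hu, hv =>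
      have hadj : H.Adj a b := hle.2 (by simp)
      Walk.cons (by exact hadj)
        (liftWalk H q (le_trans le_sup_right hle) (H.edge_vert hadj.symm) hv)

lemma liftWalk_map (H : G.Subgraph) :
    ∀ {u v : V} (p : G.Walk u v) (hle : p.toSubgraph ≤ H)
      (hu : u ∈ H.verts) (hv : v ∈ H.verts),
      (liftWalk H p hle hu hv).map H.hom = p
  | _, _, Walk.nil, _, _, _ => rfl
  | _, _, @Walk.cons _ _ a b c h q, hle, hu, hv => by
      simp only [liftWalk]
      erw [Walk.map_cons, liftWalk_map H q]
      rfl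

lemma liftWalk_length (H : G.Subgraph) {u v : V} (p : G.Walk u v) (hle : p.toSubgraph ≤ H)
    (hu : u ∈ H.verts) (hv : v ∈ H.verts) :
    (liftWalk H p hle hu hv).length = p.length := by
  conv_rhs => rw [← liftWalk_map H p hle hu hv]
  erw [Walk.length_map]

lemma liftWalk_mem_support (H : G.Subgraph) {u v m : V} (p : G.Walk u v)
    (hle : p.toSubgraph ≤ H) (hu : u ∈ H.verts) (hv : v ∈ H.verts)
    (hm : m ∈ H.verts) (hmp : m ∈ p.support) :
    (⟨m, hm⟩ : H.verts) ∈ (liftWalk H p hle hu hv).support := by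
  have h : m ∈ ((liftWalk H p hle hu hv).map H.hom).support := by
    rw [liftWalk_map]; exact hmp
  rw [Walk.support_map, List.mem_map] at h
  obtain ⟨a, ha, rfl⟩ := h
  rw [show (⟨H.hom a, hm⟩ : H.verts) = a from Subtype.ext rfl]
  exact ha

lemma split_dist [DecidableEq V] (hconn : G.Connected) {u v m : V} (p : G.Walk u v)
    (hp : p.length = G.dist u v) (hm : m ∈ p.support) :
    (p.takeUntil m hm).length = G.dist u m ∧ (p.dropUntil m hm).length = G.dist m v := by
  have h1 := G.dist_le (p.takeUntil m hm)
  have h2 := G.dist_le (p.dropUntil m hm)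
  have hsum : (p.takeUntil m hm).length + (p.dropUntil m hm).length = p.length := by
    rw [← Walk.length_append, Walk.take_spec]
  have htri := hconn.dist_triangle (u := u) (v := m) (w := v)
  omega

lemma toSubgraph_dropUntil_le [DecidableEq V] {u v m : V} (p : G.Walk u v) (hm : m ∈ p.support) :
    (p.dropUntil m hm).toSubgraph ≤ p.toSubgraph := by
  have h := Walk.toSubgraph_append (p.takeUntil m hm) (p.dropUntil m hm)
  rw [Walk.take_spec] at h
  exact le_trans le_sup_right h.ge

end Aux

/-- Let `μ` be a medico vertex of a finite connected graph `G` and let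
`H` be a `μ`-convex subgraph of `G`.  Then `H` is an isometric subgraph of `G`, `μ` is a
medico vertex of `H`, and medians of `μ, x, y` taken in `H` agree with those taken in `G`
for all vertices `x, y` of `H`. -/
theorem stmt13 {V : Type*} [Fintype V] (G : SimpleGraph V) (hconn : G.Connected)
    (μ : V) (hμ : Medico G μ) (H : G.Subgraph) (hH : VConvex G H μ) :
    (∀ x y : H.verts, H.coe.dist x y = G.dist (x : V) (y : V)) ∧
    (∀ v w : H.verts, ∃! m : H.verts, IsMedianPt H.coe ⟨μ, hH.1⟩ v w m) ∧
    (∀ x y m : H.verts, IsMedianPt H.coe ⟨μ, hH.1⟩ x y m →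
      IsMedianPt G μ (x : V) (y : V) (m : V)) := by
  classical
  -- A shortest `x`-`y` walk inside `H`, through the `G`-median `m` of `μ, x, y`.
  have build : ∀ x y : H.verts, ∀ m : V, IsMedianPt G μ x.val y.val m →
      ∃ (hmv : m ∈ H.verts) (w : H.coe.Walk x y),
        w.length = G.dist x.val y.val ∧ (⟨m, hmv⟩ : H.verts) ∈ w.support := by
    intro x y m hm
    obtain ⟨⟨p, hp, hmp⟩, ⟨q, hq, hmq⟩, ⟨r, hr, hmr⟩⟩ := hm
    have hpH : p.toSubgraph ≤ H := hH.2 x.val x.2 p hp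
    have hqH : q.toSubgraph ≤ H := hH.2 y.val y.2 q hq
    have hmv : m ∈ H.verts := hpH.1 ((Walk.mem_verts_toSubgraph p).2 hmp)
    refine ⟨hmv, ?_⟩
    have hpa := (split_dist hconn p hp hmp).2
    have hqb := (split_dist hconn q hq hmq).2
    have hra := split_dist hconn r hr hmr
    have hpaH : (p.dropUntil m hmp).reverse.toSubgraph ≤ H := by
      rw [Walk.toSubgraph_reverse]
      exact le_trans (toSubgraph_dropUntil_le p hmp) hpH
    have hqbH : (q.dropUntil m hmq).toSubgraph ≤ H :=
      le_trans (toSubgraph_dropUntil_le q hmq) hqH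
    set la := liftWalk H (p.dropUntil m hmp).reverse hpaH x.2 hmv with hla
    set lb := liftWalk H (q.dropUntil m hmq) hqbH hmv y.2 with hlb
    refine ⟨la.append lb, ?_, ?_⟩
    · rw [Walk.length_append, liftWalk_length, liftWalk_length, Walk.length_reverse,
        hpa, hqb]
      have htri := hconn.dist_triangle (u := x.val) (v := m) (w := y.val)
      have h1 := G.dist_le (r.takeUntil m hmr)
      have h2 := G.dist_le (r.dropUntil m hmr)
      have hsum : (r.takeUntil m hmr).length + (r.dropUntil m hmr).length = r.length := by
        rw [← Walk.length_append, Walk.take_spec]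
      rw [G.dist_comm (u := m) (v := x.val)]
      omega
    · rw [Walk.mem_support_append_iff]
      exact Or.inl (Walk.end_mem_support la)
  -- isometry
  have hiso : ∀ x y : H.verts, H.coe.dist x y = G.dist x.val y.val := by
    intro x y
    obtain ⟨m, hm, -⟩ := hμ x.val y.val
    obtain ⟨hmv, w, hw, -⟩ := build x y m hm
    refine le_antisymm (hw ▸ H.coe.dist_le w) ?_
    obtain ⟨s, hs⟩ := (Reachable.exists_walk_length_eq_dist ⟨w⟩ : _)
    calc G.dist x.val y.val ≤ (s.map H.hom).length := G.dist_le _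
      _ = s.length := Walk.length_map _ _
      _ = H.coe.dist x y := hs
  -- a `G`-median of `μ, x, y` with `x y ∈ H` is an `H`-median
  have fwd : ∀ x y : H.verts, ∀ m : V, IsMedianPt G μ x.val y.val m →
      ∃ hmv : m ∈ H.verts, IsMedianPt H.coe ⟨μ, hH.1⟩ x y ⟨m, hmv⟩ := by
    intro x y m hm
    obtain ⟨hmv, w, hw, hmw⟩ := build x y m hm
    obtain ⟨⟨p, hp, hmp⟩, ⟨q, hq, hmq⟩, -⟩ := hm
    have hpH : p.toSubgraph ≤ H := hH.2 x.val x.2 p hp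
    have hqH : q.toSubgraph ≤ H := hH.2 y.val y.2 q hq
    refine ⟨hmv, ⟨liftWalk H p hpH hH.1 x.2, ?_, liftWalk_mem_support _ _ _ _ _ _ hmp⟩,
      ⟨liftWalk H q hqH hH.1 y.2, ?_, liftWalk_mem_support _ _ _ _ _ _ hmq⟩,
      ⟨w, ?_, hmw⟩⟩
    · rw [liftWalk_length, hp, hiso ⟨μ, hH.1⟩ x]
    · rw [liftWalk_length, hq, hiso ⟨μ, hH.1⟩ y]
    · rw [hw, hiso x y]
  -- an `H`-median is a `G`-median
  have back : ∀ x y m : H.verts, IsMedianPt H.coe ⟨μ, hH.1⟩ x y m →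
      IsMedianPt G μ x.val y.val m.val := by
    rintro x y m ⟨⟨p, hp, hmp⟩, ⟨q, hq, hmq⟩, ⟨r, hr, hmr⟩⟩
    refine ⟨⟨p.map H.hom, ?_, ?_⟩, ⟨q.map H.hom, ?_, ?_⟩, ⟨r.map H.hom, ?_, ?_⟩⟩
    · erw [Walk.length_map]; rw [ hp, hiso ⟨μ, hH.1⟩ x]
    · erw [Walk.support_map, List.mem_map]; exact ⟨m, hmp, rfl⟩
    · erw [Walk.length_map]; rw [ hq, hiso ⟨μ, hH.1⟩ y]
    · erw [Walk.support_map, List.mem_map]; exact ⟨m, hmq, rfl⟩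
    · erw [Walk.length_map]; rw [ hr, hiso x y]
    · erw [Walk.support_map, List.mem_map]; exact ⟨m, hmr, rfl⟩
  refine ⟨hiso, ?_, back⟩
  intro v w
  obtain ⟨m, hm, huniq⟩ := hμ v.val w.val
  obtain ⟨hmv, hmH⟩ := fwd v w m hm
  exact ⟨⟨m, hmv⟩, hmH, fun m' hm' => Subtype.ext (huniq m'.val (back v w m' hm'))⟩
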